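/- Let {q_k}_{k≥0} be a non-increasing sequence of positive reals and for n ∈ ℕ let f_n := D_{2^{n+1}} − D_{2^n}. Then there is an absolute constant c > 0 such that for every n ≥ 1: ∫₀¹ ( sup_{0≤s<n} |t_{2^n+2^s}(f_n)(x)| )^{1/2} dx ≥ c n 2^{−n/2}; consequently ‖t*(f_n)‖_{L^{1/2}}^{1/2} / ‖f_n‖_{H_{1/2}}^{1/2} ≥ c n, which tends to ∞ as n → ∞. -/

import Mathlib

open MeasureTheory Filter
open scoped ENNReal NNReal

noncomputable section

namespace Walsh

/-- Lebesgue measure restricted to `[0,1)`. -/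
def μI : Measure ℝ := volume.restrict (Set.Ico (0:ℝ) 1)

/-- The `k`-th binary digit `x_k` of `x ∈ [0,1)`, using the expansion terminating
in `0`'s for dyadic rationals. -/
def digit (k : ℕ) (x : ℝ) : ℕ := (⌊x * 2 ^ (k + 1)⌋).toNat % 2

/-- `ε_k(n)`, the `k`-th binary coefficient of `n`. -/
def eps (k n : ℕ) : ℕ := if n.testBit k then 1 else 0

/-- Walsh–Paley function `w_n(x) = (-1)^{Σ_k ε_k(n) x_k}`. -/
def walsh (n : ℕ) (x : ℝ) : ℝ :=
  (-1 : ℝ) ^ (∑ k ∈ Finset.range (n + 1), eps k n * digit k x)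

/-- Walsh–Dirichlet kernel `D_n = Σ_{k=0}^{n-1} w_k`. -/
def D (n : ℕ) (x : ℝ) : ℝ := ∑ k ∈ Finset.range n, walsh k x

/-- Walsh–Fejér kernel `K_n = (1/n) Σ_{k=1}^{n} D_k`. -/
def K (n : ℕ) (x : ℝ) : ℝ := (1 / (n : ℝ)) * ∑ k ∈ Finset.Icc 1 n, D k x

/-- Partial sums `S_M(f) = Σ_{i=0}^{M-1} f̂(i) w_i` of the Walsh–Fourier series. -/
def S (f : ℝ → ℝ) (M : ℕ) (x : ℝ) : ℝ :=
  ∑ i ∈ Finset.range M, (∫ t in Set.Ico (0:ℝ) 1, f t * walsh i t) * walsh i x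

/-- `Q_n = q_0 + ⋯ + q_{n-1}`. -/
def Q (q : ℕ → ℝ) (n : ℕ) : ℝ := ∑ k ∈ Finset.range n, q k

/-- Walsh–Nörlund mean `t_n(f) = (1/Q_n) Σ_{k=1}^n q_{n-k} S_k(f)`. -/
def t (q : ℕ → ℝ) (n : ℕ) (f : ℝ → ℝ) (x : ℝ) : ℝ :=
  (1 / Q q n) * ∑ k ∈ Finset.Icc 1 n, q (n - k) * S f k x

/-- Walsh–Nörlund kernel `F_n = (1/Q_n) Σ_{k=1}^n q_{n-k} D_k`. -/
def F (q : ℕ → ℝ) (n : ℕ) (x : ℝ) : ℝ :=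
  (1 / Q q n) * ∑ k ∈ Finset.Icc 1 n, q (n - k) * D k x

/-- Maximal Nörlund operator `t^*(f) = sup_{n ≥ 1} |t_n(f)|`, valued in `ℝ≥0∞`. -/
def tstar (q : ℕ → ℝ) (f : ℝ → ℝ) (x : ℝ) : ℝ≥0∞ :=
  ⨆ n ∈ Set.Ici 1, ENNReal.ofReal |t q n f x|

/-- `L^p[0,1)` quasinorm (`0 < p ≤ 1`) of a real function, valued in `ℝ≥0∞`. -/
def LpNorm (p : ℝ) (g : ℝ → ℝ) : ℝ≥0∞ :=
  (∫⁻ x in Set.Ico (0:ℝ) 1, ENNReal.ofReal |g x| ^ p) ^ (1 / p)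

/-- `L^p[0,1)` quasinorm of an `ℝ≥0∞`-valued function. -/
def LpNormE (p : ℝ) (g : ℝ → ℝ≥0∞) : ℝ≥0∞ :=
  (∫⁻ x in Set.Ico (0:ℝ) 1, g x ^ p) ^ (1 / p)

/-- `L^∞[0,1)` norm. -/
def LinfNorm (g : ℝ → ℝ) : ℝ≥0∞ := essSup (fun x => ENNReal.ofReal |g x|) μI

/-- Dyadic maximal function `E^*(f) = sup_m |S_{2^m}(f)|`, valued in `ℝ≥0∞`. -/
def maxS (f : ℝ → ℝ) (x : ℝ) : ℝ≥0∞ := ⨆ m : ℕ, ENNReal.ofReal |S f (2 ^ m) x|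

/-- Dyadic Hardy space quasinorm `‖f‖_{H_p} = ‖sup_m |S_{2^m} f|‖_{L^p}`. -/
def HpNorm (p : ℝ) (f : ℝ → ℝ) : ℝ≥0∞ :=
  (∫⁻ x in Set.Ico (0:ℝ) 1, maxS f x ^ p) ^ (1 / p)

/-- Dyadic (logical) addition `x ∔ y = Σ_k |x_k - y_k| 2^{-(k+1)}`. -/
def dadd (x y : ℝ) : ℝ :=
  ∑' k : ℕ, |(digit k x : ℝ) - (digit k y : ℝ)| * (2 : ℝ)⁻¹ ^ (k + 1)

/-- The dyadic interval `I_N = [0, 2^{-N})`. -/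
def IN (N : ℕ) : Set ℝ := Set.Ico (0:ℝ) (1 / 2 ^ N)

/-- `F_{n,1} = (w_n/Q_n) Σ_{j=1}^r Q_{n^{(j-1)}} w_{2^{n_j}} D_{2^{n_j}}`,
the first part of the Nörlund kernel decomposition. The sum over the binary
decomposition `n = 2^{n_1} + ⋯ + 2^{n_r}` is re-indexed over the set bit
positions `i` of `n`; if `i = n_j` then `n^{(j-1)} = n mod 2^{i+1}`. -/
def F1 (q : ℕ → ℝ) (n : ℕ) (x : ℝ) : ℝ :=
  (walsh n x / Q q n) *
    ∑ i ∈ Finset.range (n + 1),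
      if n.testBit i then Q q (n % 2 ^ (i + 1)) * walsh (2 ^ i) x * D (2 ^ i) x else 0

end Walsh

namespace Walsh

lemma eps_le_one (k n : ℕ) : eps k n ≤ 1 := by
  unfold eps; split <;> simp

lemma eps_of_lt {k n : ℕ} (h : n < 2 ^ k) : eps k n = 0 := by
  simp [eps, Nat.testBit_lt_two_pow h]

lemma eps_two_pow_add_lt {k J : ℕ} (l : ℕ) (hk : k < J) : eps k (2 ^ J + l) = eps k l := by
  simp [eps, Nat.testBit_two_pow_add_gt hk]

lemma eps_two_pow_add_self {J : ℕ} (l : ℕ) (hl : l < 2 ^ J) : eps J (2 ^ J + l) = 1 := by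
  simp [eps, Nat.testBit_two_pow_add_eq, Nat.testBit_lt_two_pow hl]

lemma eps_eq_div_mod (d l : ℕ) : eps d l = (l / 2 ^ d) % 2 := by
  have h := @Nat.testBit_eq_decide_div_mod_eq d l
  unfold eps
  rcases Nat.mod_two_eq_zero_or_one (l / 2 ^ d) with h2 | h2 <;> simp [h, h2]

lemma digit_eq_zero {k : ℕ} {x : ℝ} (h0 : 0 ≤ x) (h1 : x * 2 ^ (k + 1) < 1) :
    digit k x = 0 := by
  have : ⌊x * 2 ^ (k + 1)⌋ = 0 := by
    rw [Int.floor_eq_zero_iff]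
    exact ⟨by positivity, h1⟩
  simp [digit, this]

lemma digit_eq_one {k : ℕ} {x : ℝ} (h0 : 1 ≤ x * 2 ^ (k + 1)) (h1 : x * 2 ^ (k + 1) < 2) :
    digit k x = 1 := by
  have : ⌊x * 2 ^ (k + 1)⌋ = 1 := by
    rw [Int.floor_eq_iff]
    constructor
    · exact_mod_cast h0
    · push_cast; linarith
  simp [digit, this]

lemma digit_piece {J l k : ℕ} {x : ℝ} (hk : k < J)
    (hx1 : (l : ℝ) / 2 ^ J ≤ x) (hx2 : x < ((l : ℝ) + 1) / 2 ^ J) :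
    digit k x = eps (J - 1 - k) l := by
  set d := J - 1 - k with hd
  have hJ : J = (k + 1) + d := by omega
  have h2d : (0 : ℝ) < 2 ^ d := by positivity
  have h2k : (0 : ℝ) < 2 ^ (k + 1) := by positivity
  have h2J : (0 : ℝ) < 2 ^ J := by positivity
  have hsplit : (2 : ℝ) ^ J = 2 ^ (k + 1) * 2 ^ d := by rw [hJ, pow_add]
  set m := l / 2 ^ d with hm
  have key1 : (m : ℝ) * 2 ^ d ≤ l := by exact_mod_cast Nat.div_mul_le_self l (2 ^ d)
  have key2 : (l : ℝ) + 1 ≤ ((m : ℝ) + 1) * 2 ^ d := by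
    have h2 : l % 2 ^ d < 2 ^ d := Nat.mod_lt _ (by positivity)
    have h3 : l + 1 ≤ (m + 1) * 2 ^ d := by
      have h := Nat.div_add_mod l (2 ^ d)
      rw [← hm] at h
      calc l + 1 = 2 ^ d * m + l % 2 ^ d + 1 := by omega
        _ ≤ 2 ^ d * m + 2 ^ d := by omega
        _ = (m + 1) * 2 ^ d := by ring
    exact_mod_cast h3
  have hy1 : (m : ℝ) ≤ x * 2 ^ (k + 1) := by
    have h : (m : ℝ) * 2 ^ d ≤ (x * 2 ^ (k + 1)) * 2 ^ d := by
      calc (m : ℝ) * 2 ^ d ≤ l := key1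
        _ ≤ x * 2 ^ J := (div_le_iff₀ h2J).mp hx1
        _ = x * 2 ^ (k + 1) * 2 ^ d := by rw [hsplit]; ring
    exact le_of_mul_le_mul_right h h2d
  have hy2 : x * 2 ^ (k + 1) < (m : ℝ) + 1 := by
    have h : (x * 2 ^ (k + 1)) * 2 ^ d < ((m : ℝ) + 1) * 2 ^ d := by
      calc (x * 2 ^ (k + 1)) * 2 ^ d = x * 2 ^ J := by rw [hsplit]; ring
        _ < (l : ℝ) + 1 := by
            have := (lt_div_iff₀ h2J).mp hx2
            linarith
        _ ≤ ((m : ℝ) + 1) * 2 ^ d := key2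
    exact lt_of_mul_lt_mul_right h (le_of_lt h2d)
  have hfl : ⌊x * 2 ^ (k + 1)⌋ = (m : ℤ) := by
    rw [Int.floor_eq_iff]
    constructor
    · exact_mod_cast hy1
    · push_cast; exact hy2
  rw [eps_eq_div_mod, ← hm]
  unfold digit
  rw [hfl]
  simp


lemma sum_eps_extend {n : ℕ} (x : ℝ) {A B : ℕ} (hA : n < 2 ^ A) (hAB : A ≤ B) :
    ∑ k ∈ Finset.range B, eps k n * digit k x
      = ∑ k ∈ Finset.range A, eps k n * digit k x := by
  refine (Finset.sum_subset (Finset.range_subset_range.mpr hAB) ?_).symm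
  intro k hk hk'
  have hkA : A ≤ k := by simpa using hk'
  have : n < 2 ^ k := lt_of_lt_of_le hA (Nat.pow_le_pow_right (by norm_num) hkA)
  rw [eps_of_lt this, zero_mul]

lemma walsh_eq_range {J n : ℕ} (hn : n < 2 ^ J) (x : ℝ) :
    walsh n x = (-1 : ℝ) ^ (∑ k ∈ Finset.range J, eps k n * digit k x) := by
  have hn1 : n < 2 ^ (n + 1) :=
    lt_trans (Nat.lt_two_pow_self (n := n)) (Nat.pow_lt_pow_right (by norm_num) n.lt_succ_self)
  unfold walsh
  congr 1
  rw [← sum_eps_extend x hn1 (le_max_left (n + 1) J),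
      ← sum_eps_extend x hn (le_max_right (n + 1) J)]

lemma walsh_eq_one {n : ℕ} {x : ℝ} (h : ∀ k, n.testBit k = true → digit k x = 0) :
    walsh n x = 1 := by
  unfold walsh
  have hz : ∑ k ∈ Finset.range (n + 1), eps k n * digit k x = 0 :=
    Finset.sum_eq_zero fun k _ => by
      unfold eps
      by_cases hb : n.testBit k
      · simp [hb, h k hb]
      · simp [hb]
  rw [hz, pow_zero]

lemma two_pow_succ_eq (n : ℕ) : 2 ^ (n + 1) = 2 ^ n + 2 ^ n := by
  rw [pow_succ]; omega

lemma walsh_two_pow_add {n r : ℕ} (hr : r < 2 ^ n) (x : ℝ) :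
    walsh (2 ^ n + r) x = (-1 : ℝ) ^ digit n x * walsh r x := by
  have h1 : 2 ^ n + r < 2 ^ (n + 1) := by rw [two_pow_succ_eq]; omega
  rw [walsh_eq_range h1 x, walsh_eq_range hr x, Finset.sum_range_succ]
  rw [Finset.sum_congr rfl fun k hk => by
    rw [eps_two_pow_add_lt r (Finset.mem_range.mp hk)]]
  rw [eps_two_pow_add_self r hr, one_mul, pow_add, mul_comm]

lemma walsh_piece {J n l : ℕ} {x : ℝ} (hn : n < 2 ^ J)
    (hx1 : (l : ℝ) / 2 ^ J ≤ x) (hx2 : x < ((l : ℝ) + 1) / 2 ^ J) :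
    walsh n x = (-1 : ℝ) ^ (∑ k ∈ Finset.range J, eps k n * eps (J - 1 - k) l) := by
  rw [walsh_eq_range hn]
  congr 1
  exact Finset.sum_congr rfl fun k hk => by
    rw [digit_piece (Finset.mem_range.mp hk) hx1 hx2]

lemma char_sum (J : ℕ) (c : ℕ → ℕ) :
    ∑ l ∈ Finset.range (2 ^ J), (-1 : ℝ) ^ (∑ k ∈ Finset.range J, c k * eps k l)
      = if ∀ k < J, c k % 2 = 0 then (2 : ℝ) ^ J else 0 := by
  induction J with
  | zero => simp
  | succ J ih =>
    rw [two_pow_succ_eq, Finset.sum_range_add]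
    have e1 : ∀ l ∈ Finset.range (2 ^ J),
        (-1 : ℝ) ^ (∑ k ∈ Finset.range (J + 1), c k * eps k l)
          = (-1 : ℝ) ^ (∑ k ∈ Finset.range J, c k * eps k l) := fun l hl => by
      rw [Finset.sum_range_succ, eps_of_lt (Finset.mem_range.mp hl), mul_zero, add_zero]
    have e2 : ∀ l ∈ Finset.range (2 ^ J),
        (-1 : ℝ) ^ (∑ k ∈ Finset.range (J + 1), c k * eps k (2 ^ J + l))
          = (-1 : ℝ) ^ (c J) * (-1 : ℝ) ^ (∑ k ∈ Finset.range J, c k * eps k l) := fun l hl => by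
      rw [Finset.sum_range_succ, eps_two_pow_add_self l (Finset.mem_range.mp hl), mul_one]
      rw [Finset.sum_congr rfl fun k hk => by
        rw [eps_two_pow_add_lt l (Finset.mem_range.mp hk)]]
      rw [pow_add, mul_comm]
    rw [Finset.sum_congr rfl e1, Finset.sum_congr rfl e2, ← Finset.mul_sum, ih]
    by_cases hJ : c J % 2 = 0
    · have hne : (-1 : ℝ) ^ (c J) = 1 := Even.neg_one_pow (Nat.even_iff.mpr hJ)
      rw [hne, one_mul]
      by_cases hall : ∀ k < J, c k % 2 = 0
      · have hall' : ∀ k < J + 1, c k % 2 = 0 := fun k hk => by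
          rcases Nat.lt_succ_iff_lt_or_eq.mp hk with h | h
          · exact hall k h
          · subst h; exact hJ
        rw [if_pos hall, if_pos hall', pow_succ]; ring
      · have hall' : ¬ ∀ k < J + 1, c k % 2 = 0 := fun h => hall fun k hk => h k (by omega)
        rw [if_neg hall, if_neg hall']; ring
    · have hne : (-1 : ℝ) ^ (c J) = -1 := Odd.neg_one_pow (Nat.odd_iff.mpr (by omega))
      have hall' : ¬ ∀ k < J + 1, c k % 2 = 0 := fun h => by
        have := h J (by omega); omega
      rw [hne]
      by_cases hall : ∀ k < J, c k % 2 = 0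
      · rw [if_pos hall, if_neg hall']; ring
      · rw [if_neg hall, if_neg hall']; ring

def piece (J l : ℕ) : Set ℝ := Set.Ico ((l : ℝ) / 2 ^ J) (((l : ℝ) + 1) / 2 ^ J)

lemma piece_subset {J l : ℕ} (hl : l < 2 ^ J) : piece J l ⊆ Set.Ico (0 : ℝ) 1 := by
  intro x hx
  obtain ⟨h1, h2⟩ := hx
  constructor
  · exact le_trans (by positivity) h1
  · have hl1 : ((l : ℝ) + 1) / 2 ^ J ≤ 1 := by
      rw [div_le_one (by positivity)]
      have : (l : ℕ) + 1 ≤ 2 ^ J := hl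
      exact_mod_cast this
    linarith

lemma exists_unique_piece {J : ℕ} {x : ℝ} (h0 : 0 ≤ x) (h1 : x < 1) :
    ∃ l, l < 2 ^ J ∧ x ∈ piece J l ∧ ∀ l', x ∈ piece J l' → l' = l := by
  have h2J : (0 : ℝ) < 2 ^ J := by positivity
  set y := x * 2 ^ J with hy
  have hy0 : 0 ≤ y := by positivity
  refine ⟨⌊y⌋₊, ?_, ⟨?_, ?_⟩, ?_⟩
  · have : y < 2 ^ J := by
      rw [hy]
      calc x * 2 ^ J < 1 * 2 ^ J := by exact mul_lt_mul_of_pos_right h1 h2J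
        _ = 2 ^ J := one_mul _
    have h2 : (⌊y⌋₊ : ℝ) < 2 ^ J := lt_of_le_of_lt (Nat.floor_le hy0) this
    exact_mod_cast h2
  · rw [div_le_iff₀ h2J]
    exact Nat.floor_le hy0
  · rw [lt_div_iff₀ h2J, ← hy]
    exact Nat.lt_floor_add_one y
  · intro l' hl'
    obtain ⟨ha, hb⟩ := hl'
    rw [div_le_iff₀ h2J] at ha
    rw [lt_div_iff₀ h2J] at hb
    symm
    rw [Nat.floor_eq_iff hy0, hy]
    exact ⟨ha, hb⟩

lemma volume_Ico01_fin : IsFiniteMeasure (volume.restrict (Set.Ico (0 : ℝ) 1)) := by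
  constructor
  rw [Measure.restrict_apply_univ]
  simp [Real.volume_Ico]

lemma step_integral {J : ℕ} {h : ℝ → ℝ} {v : ℕ → ℝ}
    (hv : ∀ l < 2 ^ J, ∀ x ∈ piece J l, h x = v l) :
    IntegrableOn h (Set.Ico (0 : ℝ) 1) ∧
      ∫ x in Set.Ico (0 : ℝ) 1, h x = (∑ l ∈ Finset.range (2 ^ J), v l) / 2 ^ J := by
  haveI := volume_Ico01_fin
  set φ : ℝ → ℝ :=
    fun x => ∑ l ∈ Finset.range (2 ^ J), (piece J l).indicator (fun _ => v l) x with hφ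
  have hmeas : ∀ l : ℕ, MeasurableSet (piece J l) := fun l => measurableSet_Ico
  have hint : ∀ l ∈ Finset.range (2 ^ J),
      IntegrableOn (fun x => (piece J l).indicator (fun _ => v l) x) (Set.Ico (0 : ℝ) 1) :=
    fun l _ => (integrable_const (v l)).indicator (hmeas l)
  have heq : Set.EqOn h φ (Set.Ico (0 : ℝ) 1) := by
    intro x hx
    obtain ⟨l, hl, hxl, huniq⟩ := exists_unique_piece hx.1 hx.2
    rw [hφ]
    simp only
    rw [Finset.sum_eq_single l]
    · rw [Set.indicator_of_mem hxl, hv l hl x hxl]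
    · intro l' hl' hne
      exact Set.indicator_of_notMem (fun hmem => hne (huniq l' hmem)) _
    · intro hl'; exact absurd (Finset.mem_range.mpr hl) hl'
  have hφint : IntegrableOn φ (Set.Ico (0 : ℝ) 1) := integrable_finset_sum _ hint
  have hhint : IntegrableOn h (Set.Ico (0 : ℝ) 1) :=
    hφint.congr_fun (fun x hx => (heq hx).symm) measurableSet_Ico
  refine ⟨hhint, ?_⟩
  rw [setIntegral_congr_fun measurableSet_Ico heq]
  rw [integral_finset_sum _ hint]
  have hval : ∀ l ∈ Finset.range (2 ^ J),
      ∫ x in Set.Ico (0 : ℝ) 1, (piece J l).indicator (fun _ => v l) x = v l / 2 ^ J := by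
    intro l hl
    rw [setIntegral_indicator (hmeas l)]
    rw [Set.inter_eq_self_of_subset_right (piece_subset (Finset.mem_range.mp hl))]
    rw [setIntegral_const]
    have hvol : volume (piece J l) = ENNReal.ofReal (1 / 2 ^ J) := by
      rw [piece, Real.volume_Ico]
      congr 1
      field_simp
      ring
    rw [measureReal_def, hvol]
    rw [ENNReal.toReal_ofReal (by positivity)]
    rw [smul_eq_mul]
    ring
  rw [Finset.sum_congr rfl hval, ← Finset.sum_div]

lemma lt_two_pow_succ_max (u i : ℕ) : u < 2 ^ (max u i + 1) :=
  lt_of_le_of_lt (le_max_left u i)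
    (lt_trans Nat.lt_two_pow_self (Nat.pow_lt_pow_right (by norm_num) (Nat.lt_succ_self _)))

lemma reflect_sum (J : ℕ) (g : ℕ → ℕ) (l : ℕ) :
    ∑ k ∈ Finset.range J, g k * eps (J - 1 - k) l
      = ∑ k ∈ Finset.range J, g (J - 1 - k) * eps k l := by
  rw [← Finset.sum_range_reflect (fun k => g (J - 1 - k) * eps k l) J]
  apply Finset.sum_congr rfl
  intro k hk
  have hkJ : k < J := Finset.mem_range.mp hk
  have h1 : J - 1 - (J - 1 - k) = k := by omega
  rw [h1]

lemma eps_congr_testBit {k a b : ℕ} (h : eps k a = eps k b) : a.testBit k = b.testBit k := by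
  unfold eps at h
  cases ha : a.testBit k <;> cases hb : b.testBit k <;> simp [ha, hb] at h ⊢

lemma walsh_orth_full (u i : ℕ) :
    IntegrableOn (fun x => walsh u x * walsh i x) (Set.Ico (0 : ℝ) 1) ∧
      ∫ x in Set.Ico (0 : ℝ) 1, walsh u x * walsh i x = if u = i then 1 else 0 := by
  set J := max u i + 1 with hJdef
  have hu : u < 2 ^ J := lt_two_pow_succ_max u i
  have hi : i < 2 ^ J := by rw [hJdef, max_comm]; exact lt_two_pow_succ_max i u
  set c : ℕ → ℕ := fun k => eps (J - 1 - k) u + eps (J - 1 - k) i with hc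
  set v : ℕ → ℝ := fun l => (-1 : ℝ) ^ (∑ k ∈ Finset.range J, c k * eps k l) with hv
  have hstep : ∀ l < 2 ^ J, ∀ x ∈ piece J l, walsh u x * walsh i x = v l := by
    intro l hl x hx
    rw [walsh_piece hu hx.1 hx.2, walsh_piece hi hx.1 hx.2, ← pow_add]
    rw [hv]
    congr 1
    rw [← Finset.sum_add_distrib]
    rw [Finset.sum_congr rfl (fun k _ => (add_mul (eps k u) (eps k i) (eps (J - 1 - k) l)).symm)]
    exact reflect_sum J (fun k => eps k u + eps k i) l
  obtain ⟨hint, hval⟩ := step_integral hstep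
  refine ⟨hint, ?_⟩
  rw [hval, hv]
  simp only
  rw [char_sum J c]
  by_cases hui : u = i
  · subst hui
    have : ∀ k < J, c k % 2 = 0 := fun k _ => by rw [hc]; simp only; omega
    rw [if_pos this, if_pos rfl, div_self (by positivity)]
  · have : ¬ ∀ k < J, c k % 2 = 0 := by
      intro hall
      apply hui
      apply Nat.eq_of_testBit_eq
      intro d
      by_cases hd : d < J
      · have hk : J - 1 - (J - 1 - d) = d := by omega
        have := hall (J - 1 - d) (by omega)
        rw [hc] at this
        simp only [hk] at this
        apply eps_congr_testBit
        have h1 := eps_le_one d u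
        have h2 := eps_le_one d i
        omega
      · have h2 : 2 ^ J ≤ 2 ^ d := Nat.pow_le_pow_right (by norm_num) (by omega)
        rw [Nat.testBit_lt_two_pow (lt_of_lt_of_le hu h2),
            Nat.testBit_lt_two_pow (lt_of_lt_of_le hi h2)]
    rw [if_neg this, if_neg hui, zero_div]




def fn (n : ℕ) : ℝ → ℝ := fun y => D (2 ^ (n + 1)) y - D (2 ^ n) y

lemma fn_sum (n : ℕ) (x : ℝ) :
    fn n x = ∑ u ∈ Finset.Ico (2 ^ n) (2 ^ (n + 1)), walsh u x := by
  rw [Finset.sum_Ico_eq_sub _ (Nat.pow_le_pow_right (by norm_num) n.le_succ)]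
  rfl

lemma testBit_true_ge {k m : ℕ} (h : k.testBit m = true) : 2 ^ m ≤ k := by
  by_contra hc
  rw [Nat.testBit_lt_two_pow (by omega)] at h
  exact Bool.false_ne_true h

lemma fn_coeff (n i : ℕ) :
    ∫ x in Set.Ico (0:ℝ) 1, fn n x * walsh i x
      = if i ∈ Finset.Ico (2 ^ n) (2 ^ (n + 1)) then (1:ℝ) else 0 := by
  have hrw : ∀ x, fn n x * walsh i x
      = ∑ u ∈ Finset.Ico (2 ^ n) (2 ^ (n + 1)), walsh u x * walsh i x := fun x => by
    rw [fn_sum, Finset.sum_mul]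
  rw [setIntegral_congr_fun measurableSet_Ico (fun x _ => hrw x)]
  rw [integral_finset_sum _ (fun u _ => (walsh_orth_full u i).1)]
  rw [Finset.sum_congr rfl (fun u _ => (walsh_orth_full u i).2)]
  exact Finset.sum_ite_eq' _ i (fun _ => (1:ℝ))

lemma S_fn (n M : ℕ) (x : ℝ) :
    S (fn n) M x = ∑ i ∈ Finset.range M ∩ Finset.Ico (2 ^ n) (2 ^ (n + 1)), walsh i x := by
  unfold S
  rw [Finset.sum_congr rfl (fun i _ => by rw [fn_coeff n i, ite_mul, one_mul, zero_mul])]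
  rw [← Finset.sum_filter, Finset.filter_mem_eq_inter]

lemma S_fn_zero {n M : ℕ} (hM : M ≤ 2 ^ n) (x : ℝ) : S (fn n) M x = 0 := by
  rw [S_fn]
  have : Finset.range M ∩ Finset.Ico (2 ^ n) (2 ^ (n + 1)) = ∅ := by
    ext i
    simp only [Finset.mem_inter, Finset.mem_range, Finset.mem_Ico, Finset.notMem_empty,
      iff_false]
    rintro ⟨h1, h2, _⟩
    omega
  rw [this, Finset.sum_empty]

lemma S_fn_mid {n j : ℕ} (hj : j ≤ 2 ^ n) (x : ℝ) :
    S (fn n) (2 ^ n + j) x = ∑ r ∈ Finset.range j, walsh (2 ^ n + r) x := by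
  rw [S_fn]
  have h2 : 2 ^ (n + 1) = 2 ^ n + 2 ^ n := two_pow_succ_eq n
  have hset : Finset.range (2 ^ n + j) ∩ Finset.Ico (2 ^ n) (2 ^ (n + 1))
      = Finset.Ico (2 ^ n) (2 ^ n + j) := by
    ext i
    simp only [Finset.mem_inter, Finset.mem_range, Finset.mem_Ico]
    omega
  rw [hset]
  rw [Finset.sum_Ico_eq_sum_range]
  have hjj : 2 ^ n + j - 2 ^ n = j := by omega
  rw [hjj]

lemma S_fn_top {n M : ℕ} (hM : 2 ^ (n + 1) ≤ M) (x : ℝ) : S (fn n) M x = fn n x := by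
  rw [S_fn, fn_sum]
  congr 1
  ext i
  simp only [Finset.mem_inter, Finset.mem_range, Finset.mem_Ico]
  omega

lemma fn_eval (n : ℕ) (x : ℝ) : fn n x = (-1:ℝ) ^ digit n x * D (2 ^ n) x := by
  rw [fn_sum, Finset.sum_Ico_eq_sum_range]
  have hp : 2 ^ (n + 1) - 2 ^ n = 2 ^ n := by rw [two_pow_succ_eq, Nat.add_sub_cancel]
  rw [hp]
  rw [Finset.sum_congr rfl (fun r hr => walsh_two_pow_add (Finset.mem_range.mp hr) x)]
  rw [← Finset.mul_sum]
  rfl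

lemma D_two_pow_low {N : ℕ} {x : ℝ} (h0 : 0 ≤ x) (h1 : x < 1 / 2 ^ N) :
    D (2 ^ N) x = 2 ^ N := by
  unfold D
  rw [Finset.sum_congr rfl (fun k hk => ?_), Finset.sum_const, Finset.card_range,
    nsmul_eq_mul, mul_one]
  · push_cast; ring
  · apply walsh_eq_one
    intro m hm
    have hk2 : k < 2 ^ N := Finset.mem_range.mp hk
    have hmN : m < N := by
      have := testBit_true_ge hm
      by_contra hc
      have : 2 ^ N ≤ 2 ^ m := Nat.pow_le_pow_right (by norm_num) (by omega)
      omega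
    apply digit_eq_zero h0
    have hle : (2:ℝ) ^ (m + 1) ≤ 2 ^ N := by
      apply pow_le_pow_right₀ (by norm_num)
      omega
    calc x * 2 ^ (m + 1) < (1 / 2 ^ N) * 2 ^ (m + 1) := by
          apply mul_lt_mul_of_pos_right h1 (by positivity)
      _ ≤ (1 / 2 ^ N) * 2 ^ N := by
          apply mul_le_mul_of_nonneg_left hle (by positivity)
      _ = 1 := by field_simp

lemma D_two_pow_succ (N : ℕ) (x : ℝ) :
    D (2 ^ (N + 1)) x = (1 + (-1:ℝ) ^ digit N x) * D (2 ^ N) x := by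
  unfold D
  rw [two_pow_succ_eq, Finset.sum_range_add]
  rw [Finset.sum_congr rfl (fun r hr => walsh_two_pow_add (Finset.mem_range.mp hr) x)]
  rw [← Finset.mul_sum]
  ring

lemma D_two_pow_high {N : ℕ} {x : ℝ} (h0 : 1 / 2 ^ N ≤ x) (h1 : x < 1) :
    D (2 ^ N) x = 0 := by
  induction N with
  | zero => simp at h0; linarith
  | succ N ih =>
    rw [D_two_pow_succ]
    by_cases hx : 1 / 2 ^ N ≤ x
    · rw [ih hx, mul_zero]
    · push_neg at hx
      have hd : digit N x = 1 := by
        apply digit_eq_one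
        · calc (1:ℝ) = 1 / 2 ^ (N + 1) * 2 ^ (N + 1) := by field_simp
            _ ≤ x * 2 ^ (N + 1) :=
                mul_le_mul_of_nonneg_right h0 (by positivity)
        · have h2 : (1:ℝ) / 2 ^ N * 2 ^ (N + 1) = 2 := by
            rw [pow_succ]; field_simp
          calc x * 2 ^ (N + 1) < 1 / 2 ^ N * 2 ^ (N + 1) :=
                mul_lt_mul_of_pos_right hx (by positivity)
            _ = 2 := h2
      rw [hd]
      norm_num

def A (s : ℕ) : Set ℝ := Set.Ico ((1:ℝ) / 2 ^ (s + 1)) (1 / 2 ^ s)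

lemma A_subset (s : ℕ) : A s ⊆ Set.Ico (0:ℝ) 1 := by
  intro x hx
  obtain ⟨h1, h2⟩ := hx
  refine ⟨le_trans (by positivity) h1, lt_of_lt_of_le h2 ?_⟩
  rw [div_le_one (by positivity)]
  exact one_le_pow₀ (by norm_num)

lemma walsh_on_A {s r : ℕ} (hr : r < 2 ^ s) {x : ℝ} (hx : x ∈ A s) : walsh r x = 1 := by
  apply walsh_eq_one
  intro m hm
  have hmS : m < s := by
    have := testBit_true_ge hm
    by_contra hc
    have h2 : 2 ^ s ≤ 2 ^ m := Nat.pow_le_pow_right (by norm_num) (by omega)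
    omega
  have hx0 : (0:ℝ) ≤ x := le_trans (by positivity) hx.1
  apply digit_eq_zero hx0
  have hle : (2:ℝ) ^ (m + 1) ≤ 2 ^ s := by
    apply pow_le_pow_right₀ (by norm_num)
    omega
  calc x * 2 ^ (m + 1) < (1 / 2 ^ s) * 2 ^ (m + 1) :=
        mul_lt_mul_of_pos_right hx.2 (by positivity)
    _ ≤ (1 / 2 ^ s) * 2 ^ s := mul_le_mul_of_nonneg_left hle (by positivity)
    _ = 1 := by field_simp

lemma Q_pos {q : ℕ → ℝ} (hq_pos : ∀ k, 0 < q k) {m : ℕ} (hm : 1 ≤ m) : 0 < Q q m :=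
  Finset.sum_pos (fun k _ => hq_pos k) (Finset.nonempty_range_iff.mpr (by omega))

lemma t_eval_on_A {q : ℕ → ℝ} {n s : ℕ} (hs : s < n) {x : ℝ} (hx : x ∈ A s) :
    t q (2 ^ n + 2 ^ s) (fn n) x
      = (1 / Q q (2 ^ n + 2 ^ s)) * ((-1:ℝ) ^ digit n x *
          ∑ i ∈ Finset.range (2 ^ s), q (2 ^ s - 1 - i) * ((i : ℝ) + 1)) := by
  have hsn : 2 ^ s ≤ 2 ^ n := Nat.pow_le_pow_right (by norm_num) (le_of_lt hs)
  unfold t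
  congr 1
  rw [← Finset.Ico_add_one_right_eq_Icc, Finset.sum_Ico_eq_sum_range]
  have hN1 : 2 ^ n + 2 ^ s + 1 - 1 = 2 ^ n + 2 ^ s := by
    have h1 := Nat.two_pow_pos n
    have h2 := Nat.two_pow_pos s
    omega
  rw [hN1, Finset.sum_range_add]
  have hz : ∀ k ∈ Finset.range (2 ^ n),
      q (2 ^ n + 2 ^ s - (1 + k)) * S (fn n) (1 + k) x = 0 := by
    intro k hk
    rw [S_fn_zero (M := 1 + k) (by have := Finset.mem_range.mp hk; omega), mul_zero]
  rw [Finset.sum_congr rfl hz, Finset.sum_const, smul_zero, zero_add]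
  have hterm : ∀ i ∈ Finset.range (2 ^ s),
      q (2 ^ n + 2 ^ s - (1 + (2 ^ n + i))) * S (fn n) (1 + (2 ^ n + i)) x
        = (-1:ℝ) ^ digit n x * (q (2 ^ s - 1 - i) * ((i : ℝ) + 1)) := by
    intro i hi
    have hiS : i < 2 ^ s := Finset.mem_range.mp hi
    have harg : 1 + (2 ^ n + i) = 2 ^ n + (i + 1) := by omega
    have hargq : 2 ^ n + 2 ^ s - (1 + (2 ^ n + i)) = 2 ^ s - 1 - i := by omega
    rw [hargq, harg, S_fn_mid (j := i + 1) (by omega)]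
    have hw : ∀ r ∈ Finset.range (i + 1), walsh (2 ^ n + r) x
        = (-1:ℝ) ^ digit n x := by
      intro r hr
      have hrS : r < 2 ^ s := by have := Finset.mem_range.mp hr; omega
      rw [walsh_two_pow_add (by omega) x, walsh_on_A hrS hx, mul_one]
    rw [Finset.sum_congr rfl hw, Finset.sum_const, Finset.card_range, nsmul_eq_mul]
    push_cast
    ring
  rw [Finset.sum_congr rfl hterm, ← Finset.mul_sum]

lemma sum_T_pos {q : ℕ → ℝ} (hq_pos : ∀ k, 0 < q k) (s : ℕ) :
    0 < ∑ i ∈ Finset.range (2 ^ s), q (2 ^ s - 1 - i) * ((i : ℝ) + 1) := by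
  apply Finset.sum_pos
  · intro i hi
    have : (0:ℝ) < (i : ℝ) + 1 := by positivity
    exact mul_pos (hq_pos _) this
  · exact ⟨0, Finset.mem_range.mpr (Nat.two_pow_pos s)⟩

lemma Q_double_le {q : ℕ → ℝ} (hq_anti : Antitone q) (m : ℕ) :
    Q q (2 ^ (m + 1)) ≤ 2 * Q q (2 ^ m) := by
  unfold Q
  rw [two_pow_succ_eq, Finset.sum_range_add, two_mul]
  gcongr with i hi
  exact hq_anti (Nat.le_add_left i (2 ^ m))

lemma Q_reflect (q : ℕ → ℝ) (m : ℕ) :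
    ∑ i ∈ Finset.range m, q (m - 1 - i) = Q q m :=
  Finset.sum_range_reflect q m

lemma key1 {q : ℕ → ℝ} (hq_anti : Antitone q) (hq_pos : ∀ k, 0 < q k) (s : ℕ) :
    (2:ℝ) ^ s * Q q (2 ^ s)
      ≤ 4 * ∑ i ∈ Finset.range (2 ^ s), q (2 ^ s - 1 - i) * ((i : ℝ) + 1) := by
  cases s with
  | zero =>
    simp [Q]
    linarith [hq_pos 0]
  | succ s =>
    set T := ∑ i ∈ Finset.range (2 ^ (s + 1)), q (2 ^ (s + 1) - 1 - i) * ((i : ℝ) + 1) with hT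
    have step1 : (2:ℝ) ^ s * Q q (2 ^ s) ≤ T := by
      have hsub : Finset.Ico (2 ^ s) (2 ^ (s + 1)) ⊆ Finset.range (2 ^ (s + 1)) := by
        intro i hi
        rw [Finset.mem_range]
        exact (Finset.mem_Ico.mp hi).2
      have h1 : ∑ i ∈ Finset.Ico (2 ^ s) (2 ^ (s + 1)), q (2 ^ (s + 1) - 1 - i) * ((i : ℝ) + 1)
          ≤ T := by
        rw [hT]
        apply Finset.sum_le_sum_of_subset_of_nonneg hsub
        intro i _ _
        have : (0:ℝ) < (i : ℝ) + 1 := by positivity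
        exact le_of_lt (mul_pos (hq_pos _) this)
      refine le_trans ?_ h1
      have h2 : ∀ i ∈ Finset.Ico (2 ^ s) (2 ^ (s + 1)),
          (2:ℝ) ^ s * q (2 ^ (s + 1) - 1 - i) ≤ q (2 ^ (s + 1) - 1 - i) * ((i : ℝ) + 1) := by
        intro i hi
        obtain ⟨hi1, hi2⟩ := Finset.mem_Ico.mp hi
        have hc : (2:ℝ) ^ s ≤ (i : ℝ) + 1 := by
          have : (2 ^ s : ℕ) ≤ i + 1 := by omega
          exact_mod_cast this
        rw [mul_comm]
        exact mul_le_mul_of_nonneg_left hc (le_of_lt (hq_pos _))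
      have hIco : ∑ i ∈ Finset.Ico (2 ^ s) (2 ^ (s + 1)), (2:ℝ) ^ s * q (2 ^ (s + 1) - 1 - i)
          = (2:ℝ) ^ s * Q q (2 ^ s) := by
        rw [Finset.sum_Ico_eq_sum_range]
        rw [show 2 ^ (s + 1) - 2 ^ s = 2 ^ s from by rw [two_pow_succ_eq, Nat.add_sub_cancel]]
        rw [Finset.sum_congr rfl (fun i _ => by
          rw [show 2 ^ (s + 1) - 1 - (2 ^ s + i) = 2 ^ s - 1 - i from by
            have h0 := two_pow_succ_eq s
            have h1 := Nat.two_pow_pos s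
            omega])]
        rw [← Finset.mul_sum, Q_reflect]
      calc (2:ℝ) ^ s * Q q (2 ^ s)
          = ∑ i ∈ Finset.Ico (2 ^ s) (2 ^ (s + 1)), (2:ℝ) ^ s * q (2 ^ (s + 1) - 1 - i) :=
            hIco.symm
        _ ≤ _ := Finset.sum_le_sum h2
    have step2 : Q q (2 ^ (s + 1)) ≤ 2 * Q q (2 ^ s) := Q_double_le hq_anti s
    have h2s : (0:ℝ) < 2 ^ s := by positivity
    calc (2:ℝ) ^ (s + 1) * Q q (2 ^ (s + 1)) ≤ (2:ℝ) ^ (s + 1) * (2 * Q q (2 ^ s)) := by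
          apply mul_le_mul_of_nonneg_left step2 (by positivity)
      _ = 4 * ((2:ℝ) ^ s * Q q (2 ^ s)) := by rw [pow_succ]; ring
      _ ≤ 4 * T := by linarith [step1]

lemma key2 {q : ℕ → ℝ} (hq_anti : Antitone q) (hq_pos : ∀ k, 0 < q k)
    {n s : ℕ} (hs : s < n) :
    (2:ℝ) ^ s * Q q (2 ^ n + 2 ^ s) ≤ 2 ^ (n + 2) * Q q (2 ^ s) := by
  have hsn : 2 ^ s ≤ 2 ^ n := Nat.pow_le_pow_right (by norm_num) (le_of_lt hs)
  have hmono : Q q (2 ^ n + 2 ^ s) ≤ Q q (2 ^ (n + 1)) := by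
    unfold Q
    apply Finset.sum_le_sum_of_subset_of_nonneg
    · apply Finset.range_subset_range.mpr
      rw [two_pow_succ_eq]
      have h1 := Nat.two_pow_pos n
      omega
    · intro i _ _
      exact le_of_lt (hq_pos i)
  have hQs : (2:ℝ) ^ s * q (2 ^ s) ≤ Q q (2 ^ s) := by
    unfold Q
    calc (2:ℝ) ^ s * q (2 ^ s) = ∑ _i ∈ Finset.range (2 ^ s), q (2 ^ s) := by
          rw [Finset.sum_const, Finset.card_range, nsmul_eq_mul]
          push_cast
          ring
      _ ≤ ∑ i ∈ Finset.range (2 ^ s), q i :=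
          Finset.sum_le_sum (fun i hi => hq_anti (le_of_lt (Finset.mem_range.mp hi)))
  have hsplit : Q q (2 ^ (n + 1)) ≤ Q q (2 ^ s) + 2 ^ (n + 1) * q (2 ^ s) := by
    unfold Q
    have hle : 2 ^ s ≤ 2 ^ (n + 1) := by
      rw [two_pow_succ_eq]
      have h1 := Nat.two_pow_pos n
      omega
    rw [show 2 ^ (n + 1) = 2 ^ s + (2 ^ (n + 1) - 2 ^ s) from by omega]
    rw [Finset.sum_range_add]
    gcongr
    calc ∑ i ∈ Finset.range (2 ^ (n + 1) - 2 ^ s), q (2 ^ s + i)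
        ≤ ∑ _i ∈ Finset.range (2 ^ (n + 1) - 2 ^ s), q (2 ^ s) :=
          Finset.sum_le_sum (fun i _ => hq_anti (Nat.le_add_right (2 ^ s) i))
      _ = ((2 ^ (n + 1) - 2 ^ s : ℕ) : ℝ) * q (2 ^ s) := by
          rw [Finset.sum_const, Finset.card_range, nsmul_eq_mul]
      _ ≤ 2 ^ (n + 1) * q (2 ^ s) := by
          have h1 : (2 ^ (n + 1) - 2 ^ s : ℕ) ≤ 2 ^ (n + 1) := Nat.sub_le _ _
          have h2 : ((2 ^ (n + 1) - 2 ^ s : ℕ) : ℝ) ≤ 2 ^ (n + 1) := by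
            calc ((2 ^ (n + 1) - 2 ^ s : ℕ) : ℝ) ≤ ((2 ^ (n + 1) : ℕ) : ℝ) := by exact_mod_cast h1
              _ = 2 ^ (n + 1) := by push_cast; ring
          exact mul_le_mul_of_nonneg_right h2 (le_of_lt (hq_pos _))
  have h2pow : (2:ℝ) ^ s ≤ 2 ^ (n + 1) := pow_le_pow_right₀ (by norm_num) (by omega)
  have hQspos : 0 < Q q (2 ^ s) := Q_pos hq_pos Nat.one_le_two_pow
  have hqpos := hq_pos (2 ^ s)
  calc (2:ℝ) ^ s * Q q (2 ^ n + 2 ^ s) ≤ (2:ℝ) ^ s * Q q (2 ^ (n + 1)) := by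
        apply mul_le_mul_of_nonneg_left hmono (by positivity)
    _ ≤ (2:ℝ) ^ s * (Q q (2 ^ s) + 2 ^ (n + 1) * q (2 ^ s)) := by
        apply mul_le_mul_of_nonneg_left hsplit (by positivity)
    _ = (2:ℝ) ^ s * Q q (2 ^ s) + 2 ^ (n + 1) * ((2:ℝ) ^ s * q (2 ^ s)) := by ring
    _ ≤ (2:ℝ) ^ (n + 1) * Q q (2 ^ s) + 2 ^ (n + 1) * Q q (2 ^ s) := by
        apply add_le_add
        · exact mul_le_mul_of_nonneg_right h2pow (le_of_lt hQspos)
        · exact mul_le_mul_of_nonneg_left hQs (by positivity)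
    _ = 2 ^ (n + 2) * Q q (2 ^ s) := by rw [pow_succ]; ring

lemma abs_t_bound {q : ℕ → ℝ} (hq_anti : Antitone q) (hq_pos : ∀ k, 0 < q k)
    {n s : ℕ} (hs : s < n) {x : ℝ} (hx : x ∈ A s) :
    (2:ℝ) ^ (2 * s) / 2 ^ (n + 4) ≤ |t q (2 ^ n + 2 ^ s) (fn n) x| := by
  set T := ∑ i ∈ Finset.range (2 ^ s), q (2 ^ s - 1 - i) * ((i : ℝ) + 1) with hT
  have hTpos : 0 < T := sum_T_pos hq_pos s
  have hQpos : 0 < Q q (2 ^ n + 2 ^ s) := Q_pos hq_pos (by have h1 := Nat.two_pow_pos n; have h2 := Nat.two_pow_pos s; omega)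
  have habs : |t q (2 ^ n + 2 ^ s) (fn n) x| = T / Q q (2 ^ n + 2 ^ s) := by
    rw [t_eval_on_A hs hx, ← hT]
    rw [abs_mul, abs_mul, abs_pow, abs_neg, abs_one, one_pow, one_mul]
    rw [abs_of_pos hTpos, abs_of_pos (by positivity : (0:ℝ) < 1 / Q q (2 ^ n + 2 ^ s))]
    ring
  rw [habs, div_le_div_iff₀ (by positivity) hQpos]
  have k1 := key1 hq_anti hq_pos s
  have k2 := key2 hq_anti hq_pos hs
  have h2s : (0:ℝ) < 2 ^ s := by positivity
  calc (2:ℝ) ^ (2 * s) * Q q (2 ^ n + 2 ^ s)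
      = (2:ℝ) ^ s * ((2:ℝ) ^ s * Q q (2 ^ n + 2 ^ s)) := by rw [two_mul, pow_add]; ring
    _ ≤ (2:ℝ) ^ s * (2 ^ (n + 2) * Q q (2 ^ s)) := by
        apply mul_le_mul_of_nonneg_left k2 (by positivity)
    _ = (2:ℝ) ^ (n + 2) * ((2:ℝ) ^ s * Q q (2 ^ s)) := by ring
    _ ≤ (2:ℝ) ^ (n + 2) * (4 * T) := by
        apply mul_le_mul_of_nonneg_left k1 (by positivity)
    _ = T * 2 ^ (n + 4) := by rw [pow_add, pow_add]; ring

lemma abs_walsh (n : ℕ) (x : ℝ) : |walsh n x| = 1 := by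
  unfold walsh
  rw [abs_pow, abs_neg, abs_one, one_pow]

lemma abs_S_le (n M : ℕ) (x : ℝ) : |S (fn n) M x| ≤ 2 ^ n := by
  rw [S_fn]
  calc |∑ i ∈ Finset.range M ∩ Finset.Ico (2 ^ n) (2 ^ (n + 1)), walsh i x|
      ≤ ∑ i ∈ Finset.range M ∩ Finset.Ico (2 ^ n) (2 ^ (n + 1)), |walsh i x| :=
        Finset.abs_sum_le_sum_abs _ _
    _ = ((Finset.range M ∩ Finset.Ico (2 ^ n) (2 ^ (n + 1))).card : ℝ) := by
        rw [Finset.sum_congr rfl (fun i _ => abs_walsh i x), Finset.sum_const, nsmul_eq_mul,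
          mul_one]
    _ ≤ ((2 ^ n : ℕ) : ℝ) := by
        have h1 : (Finset.range M ∩ Finset.Ico (2 ^ n) (2 ^ (n + 1))).card ≤ 2 ^ n := by
          calc (Finset.range M ∩ Finset.Ico (2 ^ n) (2 ^ (n + 1))).card
              ≤ (Finset.Ico (2 ^ n) (2 ^ (n + 1))).card :=
                Finset.card_le_card Finset.inter_subset_right
            _ = 2 ^ n := by rw [Nat.card_Ico, two_pow_succ_eq, Nat.add_sub_cancel]
        exact_mod_cast h1
    _ = 2 ^ n := by push_cast; ring

lemma sum_Icc_q (q : ℕ → ℝ) (N : ℕ) : ∑ k ∈ Finset.Icc 1 N, q (N - k) = Q q N := by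
  rw [← Finset.Ico_add_one_right_eq_Icc, Finset.sum_Ico_eq_sum_range]
  rw [show N + 1 - 1 = N from rfl]
  rw [Finset.sum_congr rfl (fun j _ => by rw [show N - (1 + j) = N - 1 - j from by omega])]
  exact Q_reflect q N

lemma abs_t_le {q : ℕ → ℝ} (hq_pos : ∀ k, 0 < q k) (N n : ℕ) (x : ℝ) :
    |t q N (fn n) x| ≤ 2 ^ n := by
  rcases Nat.eq_zero_or_pos N with h | hN
  · subst h
    unfold t
    simp
  have hQ : 0 < Q q N := Q_pos hq_pos hN
  unfold t
  rw [abs_mul, abs_of_pos (by positivity : (0:ℝ) < 1 / Q q N)]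
  have h1 : |∑ k ∈ Finset.Icc 1 N, q (N - k) * S (fn n) k x| ≤ Q q N * 2 ^ n := by
    calc |∑ k ∈ Finset.Icc 1 N, q (N - k) * S (fn n) k x|
        ≤ ∑ k ∈ Finset.Icc 1 N, |q (N - k) * S (fn n) k x| := Finset.abs_sum_le_sum_abs _ _
      _ ≤ ∑ k ∈ Finset.Icc 1 N, q (N - k) * 2 ^ n := by
          apply Finset.sum_le_sum
          intro k _
          rw [abs_mul, abs_of_pos (hq_pos _)]
          exact mul_le_mul_of_nonneg_left (abs_S_le n k x) (le_of_lt (hq_pos _))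
      _ = (∑ k ∈ Finset.Icc 1 N, q (N - k)) * 2 ^ n := (Finset.sum_mul _ _ _).symm
      _ = Q q N * 2 ^ n := by rw [sum_Icc_q]
  calc 1 / Q q N * |∑ k ∈ Finset.Icc 1 N, q (N - k) * S (fn n) k x|
      ≤ 1 / Q q N * (Q q N * 2 ^ n) :=
        mul_le_mul_of_nonneg_left h1 (by positivity)
    _ = 2 ^ n := by field_simp

lemma le_biSup_real {F : ℕ → ℝ} {n s : ℕ} (hs : s < n) {B : ℝ}
    (hB : ∀ i, F i ≤ B) : F s ≤ ⨆ i ∈ Finset.range n, F i := by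
  have hG : ∀ i, (⨆ _ : i ∈ Finset.range n, F i) ≤ max B 0 := by
    intro i
    by_cases hi : i ∈ Finset.range n
    · haveI : Nonempty (i ∈ Finset.range n) := ⟨hi⟩
      rw [ciSup_const]
      exact le_max_of_le_left (hB i)
    · haveI : IsEmpty (i ∈ Finset.range n) := ⟨hi⟩
      rw [Real.iSup_of_isEmpty]
      exact le_max_right _ _
  have hbdd : BddAbove (Set.range fun i => ⨆ _ : i ∈ Finset.range n, F i) := by
    refine ⟨max B 0, ?_⟩
    rintro y ⟨i, rfl⟩
    exact hG i
  have heq : (⨆ _ : s ∈ Finset.range n, F s) = F s := by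
    haveI : Nonempty (s ∈ Finset.range n) := ⟨Finset.mem_range.mpr hs⟩
    exact ciSup_const
  calc F s = ⨆ _ : s ∈ Finset.range n, F s := heq.symm
    _ ≤ ⨆ i ∈ Finset.range n, F i := le_ciSup hbdd s

lemma biSup_abs_nonneg (F : ℕ → ℝ) (n : ℕ) : 0 ≤ ⨆ i ∈ Finset.range n, |F i| :=
  Real.iSup_nonneg fun i => Real.iSup_nonneg fun _ => abs_nonneg _

lemma rep_mem_piece (J l : ℕ) : ((l : ℝ) / 2 ^ J) ∈ piece J l := by
  constructor
  · exact le_refl _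
  · apply div_lt_div_of_pos_right (by linarith) (by positivity)

lemma walsh_const_piece {J i l : ℕ} (hi : i < 2 ^ J) {x y : ℝ}
    (hx : x ∈ piece J l) (hy : y ∈ piece J l) : walsh i x = walsh i y := by
  rw [walsh_piece hi hx.1 hx.2, walsh_piece hi hy.1 hy.2]

lemma S_const_piece {n M l : ℕ} {x y : ℝ}
    (hx : x ∈ piece (n + 1) l) (hy : y ∈ piece (n + 1) l) :
    S (fn n) M x = S (fn n) M y := by
  rw [S_fn, S_fn]
  apply Finset.sum_congr rfl
  intro i hi
  have h2 : i < 2 ^ (n + 1) := (Finset.mem_Ico.mp (Finset.mem_inter.mp hi).2).2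
  exact walsh_const_piece h2 hx hy

lemma t_const_piece {q : ℕ → ℝ} {n N l : ℕ} {x y : ℝ}
    (hx : x ∈ piece (n + 1) l) (hy : y ∈ piece (n + 1) l) :
    t q N (fn n) x = t q N (fn n) y := by
  unfold t
  congr 1
  apply Finset.sum_congr rfl
  intro k _
  rw [S_const_piece hx hy]

lemma cval_eq (n s : ℕ) :
    ((2:ℝ) ^ (2 * s) / 2 ^ (n + 4)) ^ (1/2 : ℝ) = 2 ^ s / ((2:ℝ) ^ ((n:ℝ)/2) * 4) := by
  have h1 : ((2:ℝ) ^ (2 * s)) ^ (1/2 : ℝ) = 2 ^ s := by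
    rw [show (2:ℝ) ^ (2 * s) = ((2:ℝ) ^ s) ^ (2 : ℕ) from by
      rw [← pow_mul, Nat.mul_comm]]
    rw [← Real.rpow_natCast ((2:ℝ) ^ s) 2, ← Real.rpow_mul (by positivity)]
    norm_num
  have h2 : ((2:ℝ) ^ (n + 4)) ^ (1/2 : ℝ) = (2:ℝ) ^ ((n:ℝ)/2) * 4 := by
    rw [← Real.rpow_natCast (2:ℝ) (n + 4), ← Real.rpow_mul (by norm_num)]
    push_cast
    rw [show ((n:ℝ) + 4) * (1/2) = (n:ℝ)/2 + 2 from by ring]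
    rw [Real.rpow_add (by norm_num)]
    congr 1
    rw [show (2:ℝ) = ((2:ℕ):ℝ) from by norm_num, Real.rpow_natCast]
    norm_num
  rw [Real.div_rpow (by positivity) (by positivity), h1, h2]

lemma two_rpow_neg_half (n : ℕ) : (2:ℝ) ^ (-(n:ℝ)/2) = ((2:ℝ) ^ ((n:ℝ)/2))⁻¹ := by
  rw [show -(n:ℝ)/2 = -((n:ℝ)/2) from by ring, Real.rpow_neg (by norm_num)]

lemma part1 {q : ℕ → ℝ} (hq_anti : Antitone q) (hq_pos : ∀ k, 0 < q k)
    {n : ℕ} (hn : 1 ≤ n) :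
    (1/8 : ℝ) * n * (2:ℝ) ^ (-(n:ℝ)/2)
      ≤ ∫ x in Set.Ico (0:ℝ) 1,
          (⨆ s ∈ Finset.range n, |t q (2 ^ n + 2 ^ s) (fn n) x|) ^ (1/2 : ℝ) := by
  set g : ℝ → ℝ :=
    fun x => (⨆ s ∈ Finset.range n, |t q (2 ^ n + 2 ^ s) (fn n) x|) ^ (1/2 : ℝ) with hg
  set v : ℕ → ℝ := fun l => g ((l : ℝ) / 2 ^ (n + 1)) with hv
  have hstep : ∀ l < 2 ^ (n + 1), ∀ x ∈ piece (n + 1) l, g x = v l := by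
    intro l _ x hx
    rw [hv, hg]
    simp only
    congr 1
    refine iSup_congr fun s => iSup_congr fun _ => ?_
    rw [t_const_piece hx (rep_mem_piece (n + 1) l)]
  obtain ⟨hint, hval⟩ := step_integral hstep
  rw [hval]
  have hv_nonneg : ∀ l, 0 ≤ v l := fun l => Real.rpow_nonneg (biSup_abs_nonneg _ n) _
  have hper : ∀ s ∈ Finset.range n,
      (2:ℝ) ^ (n + 1) * ((2:ℝ) ^ (-(n:ℝ)/2) / 8)
        ≤ ∑ l ∈ Finset.Ico (2 ^ (n - s)) (2 ^ (n + 1 - s)), v l := by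
    intro s hsmem
    have hsn : s < n := Finset.mem_range.mp hsmem
    have hlb : ∀ l ∈ Finset.Ico (2 ^ (n - s)) (2 ^ (n + 1 - s)),
        ((2:ℝ) ^ (2 * s) / 2 ^ (n + 4)) ^ (1/2 : ℝ) ≤ v l := by
      intro l hl
      obtain ⟨h1, h2⟩ := Finset.mem_Ico.mp hl
      have hrepA : ((l : ℝ) / 2 ^ (n + 1)) ∈ A s := by
        constructor
        · rw [div_le_div_iff₀ (by positivity) (by positivity)]
          have hkey : (2:ℝ) ^ (n + 1) ≤ (l : ℝ) * 2 ^ (s + 1) := by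
            calc (2:ℝ) ^ (n + 1) = (2:ℝ) ^ (n - s) * 2 ^ (s + 1) := by
                  rw [← pow_add]; congr 1; omega
              _ ≤ (l : ℝ) * 2 ^ (s + 1) := by
                  apply mul_le_mul_of_nonneg_right ?_ (by positivity)
                  have : ((2 ^ (n - s) : ℕ) : ℝ) ≤ (l : ℝ) := Nat.cast_le.mpr h1
                  calc (2:ℝ) ^ (n - s) = ((2 ^ (n - s) : ℕ) : ℝ) := by push_cast; ring
                    _ ≤ (l : ℝ) := this
          linarith
        · rw [div_lt_div_iff₀ (by positivity) (by positivity)]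
          have hkey : (l : ℝ) * 2 ^ s < (2:ℝ) ^ (n + 1) := by
            calc (l : ℝ) * 2 ^ s < (2:ℝ) ^ (n + 1 - s) * 2 ^ s := by
                  apply mul_lt_mul_of_pos_right ?_ (by positivity)
                  have : (l : ℝ) < ((2 ^ (n + 1 - s) : ℕ) : ℝ) := Nat.cast_lt.mpr h2
                  calc (l : ℝ) < ((2 ^ (n + 1 - s) : ℕ) : ℝ) := this
                    _ = (2:ℝ) ^ (n + 1 - s) := by push_cast; ring
              _ = (2:ℝ) ^ (n + 1) := by rw [← pow_add]; congr 1; omega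
          linarith
      rw [hv]
      simp only
      rw [hg]
      simp only
      have hb := abs_t_bound hq_anti hq_pos hsn hrepA
      have hle := le_biSup_real (F := fun i => |t q (2 ^ n + 2 ^ i) (fn n) ((l : ℝ) / 2 ^ (n + 1))|)
        hsn (B := (2:ℝ) ^ n) (fun i => abs_t_le hq_pos _ n _)
      exact Real.rpow_le_rpow (by positivity) (le_trans hb hle) (by norm_num)
    have hcard : (Finset.Ico (2 ^ (n - s)) (2 ^ (n + 1 - s))).card = 2 ^ (n - s) := by
      rw [Nat.card_Ico]
      rw [show n + 1 - s = (n - s) + 1 from by omega, two_pow_succ_eq, Nat.add_sub_cancel]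
    have hsum := Finset.card_nsmul_le_sum (Finset.Ico (2 ^ (n - s)) (2 ^ (n + 1 - s))) v _ hlb
    rw [hcard, nsmul_eq_mul] at hsum
    refine le_trans (le_of_eq ?_) hsum
    push_cast
    rw [cval_eq, two_rpow_neg_half]
    have hA : (0:ℝ) < (2:ℝ) ^ ((n:ℝ)/2) := Real.rpow_pos_of_pos (by norm_num) _
    have hpow : (2:ℝ) ^ (n - s) * 2 ^ s = 2 ^ n := by rw [← pow_add]; congr 1; omega
    rw [pow_succ]
    field_simp
    nlinarith [hpow, hA]
  have hsum : (n:ℝ) * ((2:ℝ) ^ (n + 1) * ((2:ℝ) ^ (-(n:ℝ)/2) / 8))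
      ≤ ∑ l ∈ Finset.range (2 ^ (n + 1)), v l := by
    have hdisj : (↑(Finset.range n) : Set ℕ).PairwiseDisjoint
        (fun s => Finset.Ico (2 ^ (n - s)) (2 ^ (n + 1 - s))) := by
      intro s hsmem s' hs'mem hne
      have hs1 : s < n := Finset.mem_range.mp (by simpa using hsmem)
      have hs2 : s' < n := Finset.mem_range.mp (by simpa using hs'mem)
      simp only [Function.onFun]
      rw [Finset.disjoint_left]
      intro a ha ha'
      obtain ⟨ha1, ha2⟩ := Finset.mem_Ico.mp ha
      obtain ⟨ha3, ha4⟩ := Finset.mem_Ico.mp ha'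
      rcases lt_or_gt_of_ne hne with h | h
      · have : 2 ^ (n + 1 - s') ≤ 2 ^ (n - s) := Nat.pow_le_pow_right (by norm_num) (by omega)
        omega
      · have : 2 ^ (n + 1 - s) ≤ 2 ^ (n - s') := Nat.pow_le_pow_right (by norm_num) (by omega)
        omega
    have hsub : (Finset.range n).biUnion (fun s => Finset.Ico (2 ^ (n - s)) (2 ^ (n + 1 - s)))
        ⊆ Finset.range (2 ^ (n + 1)) := by
      intro l hl
      obtain ⟨s, hsmem, hls⟩ := Finset.mem_biUnion.mp hl
      rw [Finset.mem_range]
      have h2 : 2 ^ (n + 1 - s) ≤ 2 ^ (n + 1) := Nat.pow_le_pow_right (by norm_num) (by omega)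
      have := (Finset.mem_Ico.mp hls).2
      omega
    calc (n:ℝ) * ((2:ℝ) ^ (n + 1) * ((2:ℝ) ^ (-(n:ℝ)/2) / 8))
        = ∑ _s ∈ Finset.range n, (2:ℝ) ^ (n + 1) * ((2:ℝ) ^ (-(n:ℝ)/2) / 8) := by
          rw [Finset.sum_const, Finset.card_range, nsmul_eq_mul]
      _ ≤ ∑ s ∈ Finset.range n,
            ∑ l ∈ Finset.Ico (2 ^ (n - s)) (2 ^ (n + 1 - s)), v l := Finset.sum_le_sum hper
      _ = ∑ l ∈ (Finset.range n).biUnion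
            (fun s => Finset.Ico (2 ^ (n - s)) (2 ^ (n + 1 - s))), v l :=
          (Finset.sum_biUnion hdisj).symm
      _ ≤ ∑ l ∈ Finset.range (2 ^ (n + 1)), v l :=
          Finset.sum_le_sum_of_subset_of_nonneg hsub (fun l _ _ => hv_nonneg l)
  rw [le_div_iff₀ (by positivity : (0:ℝ) < 2 ^ (n + 1))]
  calc (1/8 : ℝ) * n * (2:ℝ) ^ (-(n:ℝ)/2) * 2 ^ (n + 1)
      = (n:ℝ) * ((2:ℝ) ^ (n + 1) * ((2:ℝ) ^ (-(n:ℝ)/2) / 8)) := by ring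
    _ ≤ ∑ l ∈ Finset.range (2 ^ (n + 1)), v l := hsum





lemma maxS_fn (n : ℕ) (x : ℝ) : maxS (fn n) x = ENNReal.ofReal |fn n x| := by
  unfold maxS
  apply le_antisymm
  · apply iSup_le
    intro m
    rcases le_or_gt m n with hm | hm
    · rw [S_fn_zero (M := 2 ^ m) (Nat.pow_le_pow_right (by norm_num) hm)]
      simp
    · rw [S_fn_top (M := 2 ^ m) (Nat.pow_le_pow_right (by norm_num) hm)]
  · have h := le_iSup (fun m => ENNReal.ofReal |S (fn n) (2 ^ m) x|) (n + 1)
    rwa [S_fn_top (M := 2 ^ (n + 1)) (le_refl _)] at h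

lemma abs_fn_low {n : ℕ} {x : ℝ} (h0 : 0 ≤ x) (h1 : x < 1 / 2 ^ n) : |fn n x| = 2 ^ n := by
  rw [fn_eval, abs_mul, abs_pow, abs_neg, abs_one, one_pow, one_mul,
    D_two_pow_low h0 h1, abs_of_pos (by positivity)]

lemma abs_fn_high {n : ℕ} {x : ℝ} (h0 : 1 / 2 ^ n ≤ x) (h1 : x < 1) : |fn n x| = 0 := by
  rw [fn_eval, abs_mul, D_two_pow_high h0 h1, abs_zero, mul_zero]

lemma rpow_nat_half (n : ℕ) : ((2:ℝ) ^ n) ^ (1/2 : ℝ) = (2:ℝ) ^ ((n:ℝ)/2) := by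
  rw [← Real.rpow_natCast (2:ℝ) n, ← Real.rpow_mul (by norm_num)]
  congr 1
  ring

lemma half_mul_inv (n : ℕ) : (2:ℝ) ^ ((n:ℝ)/2) * (1 / 2 ^ n) = (2:ℝ) ^ (-(n:ℝ)/2) := by
  rw [one_div, ← Real.rpow_natCast (2:ℝ) n, ← Real.rpow_neg (by norm_num),
    ← Real.rpow_add (by norm_num)]
  congr 1
  ring

lemma denom_int (n : ℕ) :
    ∫⁻ x in Set.Ico (0:ℝ) 1, maxS (fn n) x ^ (1/2 : ℝ)
      = ENNReal.ofReal ((2:ℝ) ^ (-(n:ℝ)/2)) := by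
  have hsub : Set.Ico (0:ℝ) (1 / 2 ^ n) ⊆ Set.Ico (0:ℝ) 1 := by
    apply Set.Ico_subset_Ico (le_refl _)
    rw [div_le_one (by positivity)]
    exact one_le_pow₀ (by norm_num)
  have hcongr : ∀ᵐ x ∂(volume : Measure ℝ), x ∈ Set.Ico (0:ℝ) 1 →
      maxS (fn n) x ^ (1/2 : ℝ)
        = (Set.Ico (0:ℝ) (1/2^n)).indicator
            (fun _ => ENNReal.ofReal ((2:ℝ)^n) ^ (1/2 : ℝ)) x := by
    apply ae_of_all
    intro x hx
    rcases lt_or_ge x (1/2^n) with hxn | hxn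
    · rw [maxS_fn, abs_fn_low hx.1 hxn, Set.indicator_of_mem (Set.mem_Ico.mpr ⟨hx.1, hxn⟩)]
    · rw [maxS_fn, abs_fn_high hxn hx.2,
        Set.indicator_of_notMem (fun hmem => absurd hmem.2 (not_lt.mpr hxn))]
      rw [ENNReal.ofReal_zero, ENNReal.zero_rpow_of_pos (by norm_num)]
  rw [setLIntegral_congr_fun_ae measurableSet_Ico hcongr]
  rw [lintegral_indicator measurableSet_Ico, setLIntegral_const,
    Measure.restrict_apply measurableSet_Ico, Set.inter_eq_left.mpr hsub,
    Real.volume_Ico, sub_zero]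
  rw [ENNReal.ofReal_rpow_of_pos (by positivity), ← ENNReal.ofReal_mul (by positivity)]
  rw [rpow_nat_half, half_mul_inv]

lemma norm_pow_half {X : ℝ≥0∞} : (X ^ ((1:ℝ) / (1/2 : ℝ))) ^ (1/2 : ℝ) = X := by
  rw [show (1:ℝ) / (1/2 : ℝ) = 2 from by norm_num, ← ENNReal.rpow_mul]
  norm_num

lemma A_not_mem_both {s s' : ℕ} (h : s < s') {x : ℝ} (hx : x ∈ A s) (hx' : x ∈ A s') :
    False := by
  have hle : (1:ℝ)/2^s' ≤ 1/2^(s+1) := by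
    rw [div_le_div_iff₀ (by positivity) (by positivity), one_mul, one_mul]
    exact pow_le_pow_right₀ (by norm_num) (by omega)
  have h1 := hx.1
  have h2 := hx'.2
  linarith

lemma A_eq_of_mem {s s' : ℕ} {x : ℝ} (hx : x ∈ A s) (hx' : x ∈ A s') : s = s' := by
  by_contra hne
  rcases lt_or_gt_of_ne hne with h | h
  · exact A_not_mem_both h hx hx'
  · exact A_not_mem_both h hx' hx

lemma cval_meas (n s : ℕ) :
    ((2:ℝ) ^ (2 * s) / 2 ^ (n + 4)) ^ (1/2 : ℝ) * (1 / 2 ^ (s + 1))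
      = (2:ℝ) ^ (-(n:ℝ)/2) / 8 := by
  rw [cval_eq, two_rpow_neg_half]
  have hA : (0:ℝ) < (2:ℝ) ^ ((n:ℝ)/2) := Real.rpow_pos_of_pos (by norm_num) _
  rw [pow_succ]
  field_simp
  ring

lemma num_lb {q : ℕ → ℝ} (hq_anti : Antitone q) (hq_pos : ∀ k, 0 < q k)
    {n : ℕ} (hn : 1 ≤ n) :
    ENNReal.ofReal ((n:ℝ) * ((2:ℝ) ^ (-(n:ℝ)/2) / 8))
      ≤ ∫⁻ x in Set.Ico (0:ℝ) 1, tstar q (fn n) x ^ (1/2 : ℝ) := by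
  set c : ℕ → ℝ≥0∞ := fun s => ENNReal.ofReal (((2:ℝ) ^ (2 * s) / 2 ^ (n + 4)) ^ (1/2 : ℝ))
    with hc
  have hpt : ∀ x, (∑ s ∈ Finset.range n, (A s).indicator (fun _ => c s) x)
      ≤ tstar q (fn n) x ^ (1/2 : ℝ) := by
    intro x
    by_cases hex : ∃ s ∈ Finset.range n, x ∈ A s
    · obtain ⟨s0, hs0, hxs0⟩ := hex
      rw [Finset.sum_eq_single s0]
      · rw [Set.indicator_of_mem hxs0]
        have h1 : ENNReal.ofReal ((2:ℝ) ^ (2 * s0) / 2 ^ (n + 4)) ≤ tstar q (fn n) x := by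
          have hb := abs_t_bound hq_anti hq_pos (Finset.mem_range.mp hs0) hxs0
          refine le_trans (ENNReal.ofReal_le_ofReal hb) ?_
          unfold tstar
          refine le_iSup₂ (f := fun N (_ : N ∈ Set.Ici 1) => ENNReal.ofReal |t q N (fn n) x|)
            (2 ^ n + 2 ^ s0) ?_
          simp only [Set.mem_Ici]
          have h1 := Nat.two_pow_pos n
          have h2 := Nat.two_pow_pos s0
          omega
        calc c s0 = (ENNReal.ofReal ((2:ℝ) ^ (2 * s0) / 2 ^ (n + 4))) ^ (1/2 : ℝ) := by
              rw [hc]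
              exact (ENNReal.ofReal_rpow_of_pos (by positivity)).symm
          _ ≤ tstar q (fn n) x ^ (1/2 : ℝ) := ENNReal.rpow_le_rpow h1 (by norm_num)
      · intro s hs hne
        apply Set.indicator_of_notMem
        intro hmem
        exact hne (A_eq_of_mem hmem hxs0)
      · intro h; exact absurd hs0 h
    · push_neg at hex
      rw [Finset.sum_eq_zero (fun s hs => Set.indicator_of_notMem (hex s hs) _)]
      exact zero_le
  have hmeasind : ∀ s ∈ Finset.range n,
      Measurable fun x => (A s).indicator (fun _ => c s) x :=
    fun s _ => measurable_const.indicator measurableSet_Ico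
  calc ENNReal.ofReal ((n:ℝ) * ((2:ℝ) ^ (-(n:ℝ)/2) / 8))
      = ∑ s ∈ Finset.range n, c s * volume (A s) := by
        have hvol : ∀ s : ℕ, volume (A s) = ENNReal.ofReal (1 / 2 ^ (s + 1)) := by
          intro s
          rw [A, Real.volume_Ico]
          congr 1
          rw [pow_succ]
          field_simp
          norm_num
        rw [Finset.sum_congr rfl (fun s _ => by
          rw [hvol s, hc, ← ENNReal.ofReal_mul (by positivity), cval_meas n s])]
        rw [Finset.sum_const, Finset.card_range, nsmul_eq_mul, ← ENNReal.ofReal_natCast n,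
          ← ENNReal.ofReal_mul (Nat.cast_nonneg n)]
    _ = ∫⁻ x in Set.Ico (0:ℝ) 1,
          (∑ s ∈ Finset.range n, (A s).indicator (fun _ => c s) x) := by
        rw [lintegral_finset_sum _ hmeasind]
        apply Finset.sum_congr rfl
        intro s _
        rw [show A s = Set.Ico ((1:ℝ)/2^(s+1)) (1/2^s) from rfl]
        have hinter : Set.Ico ((1:ℝ)/2^(s+1)) (1/2^s) ∩ Set.Ico (0:ℝ) 1
            = Set.Ico ((1:ℝ)/2^(s+1)) (1/2^s) := Set.inter_eq_left.mpr (A_subset s)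
        rw [lintegral_indicator measurableSet_Ico, setLIntegral_const,
          Measure.restrict_apply measurableSet_Ico, hinter]
    _ ≤ ∫⁻ x in Set.Ico (0:ℝ) 1, tstar q (fn n) x ^ (1/2 : ℝ) := lintegral_mono hpt

lemma ratio_lb {q : ℕ → ℝ} (hq_anti : Antitone q) (hq_pos : ∀ k, 0 < q k)
    {n : ℕ} (hn : 1 ≤ n) :
    ENNReal.ofReal ((1/8 : ℝ) * n)
      ≤ (LpNormE (1/2) (tstar q (fn n))) ^ (1/2 : ℝ)
          / (HpNorm (1/2) (fn n)) ^ (1/2 : ℝ) := by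
  have hden : (HpNorm (1/2) (fn n)) ^ (1/2 : ℝ) = ENNReal.ofReal ((2:ℝ) ^ (-(n:ℝ)/2)) := by
    unfold HpNorm
    rw [norm_pow_half, denom_int]
  have hnum : ENNReal.ofReal ((n:ℝ) * ((2:ℝ) ^ (-(n:ℝ)/2) / 8))
      ≤ (LpNormE (1/2) (tstar q (fn n))) ^ (1/2 : ℝ) := by
    unfold LpNormE
    rw [norm_pow_half]
    exact num_lb hq_anti hq_pos hn
  have hpos : (0:ℝ) < (2:ℝ) ^ (-(n:ℝ)/2) := Real.rpow_pos_of_pos (by norm_num) _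
  have heq : (1/8 : ℝ) * n = ((n:ℝ) * ((2:ℝ) ^ (-(n:ℝ)/2) / 8)) / ((2:ℝ) ^ (-(n:ℝ)/2)) := by
    field_simp
  rw [heq, ENNReal.ofReal_div_of_pos hpos]
  exact ENNReal.div_le_div hnum (le_of_eq hden)

end Walsh
/-- quantitative unboundedness at the endpoint `p = 1/2`. -/
theorem norlund_maximal_lower_bound_half
    (q : ℕ → ℝ) (hq_anti : Antitone q) (hq_pos : ∀ k, 0 < q k) :
    ∃ c : ℝ, 0 < c ∧
      (∀ n : ℕ, 1 ≤ n →
        c * n * (2:ℝ) ^ (-(n:ℝ) / 2)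
          ≤ ∫ x in Set.Ico (0:ℝ) 1,
              (⨆ s ∈ Finset.range n,
                |Walsh.t q (2 ^ n + 2 ^ s)
                  (fun y => Walsh.D (2 ^ (n + 1)) y - Walsh.D (2 ^ n) y) x|) ^ (1/2 : ℝ))
      ∧ (∀ n : ℕ, 1 ≤ n →
          ENNReal.ofReal (c * n)
            ≤ (Walsh.LpNormE (1/2)
                  (Walsh.tstar q (fun y => Walsh.D (2 ^ (n + 1)) y - Walsh.D (2 ^ n) y)))
                    ^ (1/2 : ℝ)
              / (Walsh.HpNorm (1/2)
                  (fun y => Walsh.D (2 ^ (n + 1)) y - Walsh.D (2 ^ n) y)) ^ (1/2 : ℝ))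
      ∧ Filter.Tendsto (fun n : ℕ =>
            (Walsh.LpNormE (1/2)
                (Walsh.tstar q (fun y => Walsh.D (2 ^ (n + 1)) y - Walsh.D (2 ^ n) y)))
                  ^ (1/2 : ℝ)
              / (Walsh.HpNorm (1/2)
                  (fun y => Walsh.D (2 ^ (n + 1)) y - Walsh.D (2 ^ n) y)) ^ (1/2 : ℝ))
          Filter.atTop (nhds ⊤) := by
  refine ⟨1/8, by norm_num, ?_, ?_, ?_⟩
  · intro n hn
    have h := Walsh.part1 hq_anti hq_pos hn
    have heq : -(n:ℝ) / 2 = -(n:ℝ)/2 := rfl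
    exact h
  · intro n hn
    exact Walsh.ratio_lb hq_anti hq_pos hn
  · have hlim : Filter.Tendsto (fun n : ℕ => ENNReal.ofReal ((1/8:ℝ) * n))
        Filter.atTop (nhds ⊤) := by
      apply ENNReal.tendsto_ofReal_atTop.comp
      exact Filter.Tendsto.const_mul_atTop (by norm_num) tendsto_natCast_atTop_atTop
    apply tendsto_nhds_top_mono hlim
    have : ∀ᶠ (n : ℕ) in Filter.atTop, ENNReal.ofReal ((1/8:ℝ) * n)
        ≤ (Walsh.LpNormE (1/2)
              (Walsh.tstar q (fun y => Walsh.D (2 ^ (n + 1)) y - Walsh.D (2 ^ n) y)))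
                ^ (1/2 : ℝ)
          / (Walsh.HpNorm (1/2)
              (fun y => Walsh.D (2 ^ (n + 1)) y - Walsh.D (2 ^ n) y)) ^ (1/2 : ℝ) := by
      rw [Filter.eventually_atTop]
      exact ⟨1, fun n hn => Walsh.ratio_lb hq_anti hq_pos hn⟩
    exact this
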